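/- If x and y are global minimizers whose domain of crossing D is bounded and x_i > y_i for all i in Z \ D, then D is empty. -/

import Mathlib

open Finset Filter Topology

noncomputable def d1 (f : ℝ → ℝ → ℝ) (ν μ : ℝ) : ℝ := deriv (fun t => f t μ) ν
noncomputable def d2 (f : ℝ → ℝ → ℝ) (ν μ : ℝ) : ℝ := deriv (fun t => f ν t) μ
noncomputable def d11 (f : ℝ → ℝ → ℝ) (ν μ : ℝ) : ℝ := deriv (fun t => d1 f t μ) ν
noncomputable def d12 (f : ℝ → ℝ → ℝ) (ν μ : ℝ) : ℝ := deriv (fun t => d2 f t μ) ν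
noncomputable def d22 (f : ℝ → ℝ → ℝ) (ν μ : ℝ) : ℝ := deriv (fun t => d2 f ν t) μ

/-- The local energy at site `i` of the sequence `z`:  `S_i(z) = ∑_{j=1}^r f_j(z_i, z_{i+j})`. -/
noncomputable def siteE (r : ℕ) (f : ℕ → ℝ → ℝ → ℝ) (z : ℤ → ℝ) (i : ℤ) : ℝ :=
  ∑ j ∈ Finset.Icc 1 r, f j (z i) (z (i + j))

/-- `W_B` for the segment `B = [a,b] ⊂ ℤ`. -/
noncomputable def Wseg (r : ℕ) (f : ℕ → ℝ → ℝ → ℝ) (a b : ℤ) (z : ℤ → ℝ) : ℝ :=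
  ∑ i ∈ Finset.Icc a b, siteE r f z i

/-- A global minimizer: for every segment with interior `[a,b]` and every variation `v`
supported in `[a,b]`, the energy does not decrease. -/
def IsGlobalMin (r : ℕ) (f : ℕ → ℝ → ℝ → ℝ) (x : ℤ → ℝ) : Prop :=
  ∀ a b : ℤ, ∀ v : ℤ → ℝ, (∀ i, v i ≠ 0 → i ∈ Finset.Icc a b) →
    Wseg r f (a - r) b x ≤ Wseg r f (a - r) b (x + v)

/-- The variational monotone recurrence relation `∑_{j=i-r}^{i} ∂_i S_j(x) = 0` at site `i`. -/
def SolvesEL (r : ℕ) (f : ℕ → ℝ → ℝ → ℝ) (x : ℤ → ℝ) (i : ℤ) : Prop :=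
  (∑ j ∈ Finset.Icc 1 r, (d1 (f j) (x i) (x (i + j)) + d2 (f j) (x (i - j)) (x i))) = 0

/-- A local energy of range `r` in the sense of Definition 1.5 of the paper. -/
structure LocalEnergy (r : ℕ) (K lam : ℝ) where
  f : ℕ → ℝ → ℝ → ℝ
  smooth : ∀ j, ContDiff ℝ 2 (fun p : ℝ × ℝ => f j p.1 p.2)
  periodic : ∀ j ν μ, f j (ν + 1) (μ + 1) = f j ν μ
  bound11 : ∀ j ν μ, |d11 (f j) ν μ| ≤ K / r
  bound12 : ∀ j ν μ, |d12 (f j) ν μ| ≤ K / r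
  bound22 : ∀ j ν μ, |d22 (f j) ν μ| ≤ K / r
  coercive : ∀ j ∈ Finset.Icc 1 r, ∀ C : ℝ, ∃ R : ℝ, ∀ ν μ : ℝ, R ≤ |ν - μ| → C ≤ f j ν μ
  twist : ∀ j ∈ Finset.Icc 1 r, ∀ ν μ : ℝ, d12 (f j) ν μ ≤ -lam

/-- `x` and `y` are weakly ordered on the set `s`. -/
def WOrd (x y : ℤ → ℝ) (s : Set ℤ) : Prop :=
  (∀ i ∈ s, x i ≤ y i) ∨ (∀ i ∈ s, y i ≤ x i)

/-- `D` is an interval outside of which (on both components of the complement)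
`x` and `y` are weakly ordered. -/
def CrossProp (x y : ℤ → ℝ) (D : Set ℤ) : Prop :=
  D.OrdConnected ∧ WOrd x y {i | ∀ j ∈ D, i < j} ∧ WOrd x y {i | ∀ j ∈ D, j < i}

/-- The domain of crossing of `x` and `y`: the minimal interval `D` such that `x` and `y`
are weakly ordered on the connected components of its complement. -/
def IsCrossingDomain (x y : ℤ → ℝ) (D : Set ℤ) : Prop :=
  CrossProp x y D ∧ ∀ D' : Set ℤ, CrossProp x y D' → D ⊆ D'

/-- The translation `(τ_{k,l} x)_i = x_{i-k} + l`. -/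
def transl (k l : ℤ) (x : ℤ → ℝ) : ℤ → ℝ := fun i => x (i - k) + l

/-- The Birkhoff property. -/
def Birkhoff (x : ℤ → ℝ) : Prop :=
  ∀ k l : ℤ, (∀ i, transl k l x i ≤ x i) ∨ (∀ i, x i ≤ transl k l x i)

lemma partial2_hasDerivAt {f : ℝ → ℝ → ℝ} (hf : ContDiff ℝ 2 (fun p : ℝ × ℝ => f p.1 p.2))
    (ν s : ℝ) : HasDerivAt (fun t => f ν t) (d2 f ν s) s := by
  have hd : DifferentiableAt ℝ (fun t => f ν t) s := by
    have : DifferentiableAt ℝ (fun p : ℝ × ℝ => f p.1 p.2) (ν, s) :=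
      (hf.differentiable (by norm_num)).differentiableAt
    exact this.comp s ((differentiableAt_const ν).prodMk differentiableAt_id)
  simpa [d2] using hd.hasDerivAt

lemma key_strict {f : ℝ → ℝ → ℝ} (hf : ContDiff ℝ 2 (fun p : ℝ × ℝ => f p.1 p.2))
    {lam : ℝ} (hlam : 0 < lam) (htw : ∀ ν μ, d12 f ν μ ≤ -lam)
    {ν ν' μ μ' : ℝ} (hν : ν' < ν) (hμ : μ < μ') :
    f ν μ' + f ν' μ < f ν μ + f ν' μ' := by
  have hanti : ∀ s : ℝ, d2 f ν s < d2 f ν' s := by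
    intro s
    have : StrictAnti (fun t => d2 f t s) :=
      strictAnti_of_deriv_neg (fun t => lt_of_le_of_lt (htw t s) (by linarith))
    exact this hν
  have hg : StrictAnti (fun s => f ν s - f ν' s) := by
    apply strictAnti_of_deriv_neg
    intro s
    have h1 := partial2_hasDerivAt hf ν s
    have h2 := partial2_hasDerivAt hf ν' s
    rw [show (fun s => f ν s - f ν' s) = (fun t => f ν t) - (fun t => f ν' t) from rfl, (h1.sub h2).deriv]
    linarith [hanti s]
  have := hg hμ
  simp only at this
  linarith

lemma key_maxmin {f : ℝ → ℝ → ℝ} (hf : ContDiff ℝ 2 (fun p : ℝ × ℝ => f p.1 p.2))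
    {lam : ℝ} (hlam : 0 < lam) (htw : ∀ ν μ, d12 f ν μ ≤ -lam)
    (ν ν' μ μ' : ℝ) :
    f (max ν ν') (max μ μ') + f (min ν ν') (min μ μ') ≤ f ν μ + f ν' μ' := by
  have key_weak : ∀ {ν ν' μ μ' : ℝ}, ν' ≤ ν → μ ≤ μ' →
      f ν μ' + f ν' μ ≤ f ν μ + f ν' μ' := by
    intro ν ν' μ μ' hν hμ
    rcases eq_or_lt_of_le hν with h | h
    · subst h; linarith
    rcases eq_or_lt_of_le hμ with h2 | h2
    · subst h2; linarith
    · exact (key_strict hf hlam htw h h2).le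
  rcases le_total ν' ν with h1 | h1 <;> rcases le_total μ' μ with h2 | h2
  · rw [max_eq_left h1, max_eq_left h2, min_eq_right h1, min_eq_right h2]
  · rw [max_eq_left h1, max_eq_right h2, min_eq_right h1, min_eq_left h2]
    exact key_weak h1 h2
  · rw [max_eq_right h1, max_eq_left h2, min_eq_left h1, min_eq_right h2]
    linarith [key_weak h1 h2]
  · rw [max_eq_right h1, max_eq_right h2, min_eq_left h1, min_eq_left h2]
    linarith

/-- If the domain of crossing `D` of two global minimizers is bounded (finite) and
`x_i > y_i` for all `i ∉ D`, then `D` is empty. -/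
theorem stmt11 (r : ℕ) (hr : 1 ≤ r) (K lam : ℝ) (hK : 0 < K) (hlam : 0 < lam)
    (E : LocalEnergy r K lam) (x y : ℤ → ℝ)
    (hx : IsGlobalMin r E.f x) (hy : IsGlobalMin r E.f y)
    (D : Set ℤ) (hD : IsCrossingDomain x y D) (hfin : D.Finite)
    (hout : ∀ i : ℤ, i ∉ D → y i < x i) :
    D = ∅ := by
  by_contra hne
  obtain ⟨a, haD, hamin⟩ : ∃ a ∈ D, ∀ j ∈ D, a ≤ j := by
    have hne' : hfin.toFinset.Nonempty := by
      rw [Set.Finite.toFinset_nonempty]; exact Set.nonempty_iff_ne_empty.2 hne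
    refine ⟨hfin.toFinset.min' hne', hfin.mem_toFinset.1 (Finset.min'_mem _ _), ?_⟩
    intro j hj; exact Finset.min'_le _ _ (hfin.mem_toFinset.2 hj)
  obtain ⟨b, hbD, hbmax⟩ : ∃ b ∈ D, ∀ j ∈ D, j ≤ b := by
    have hne' : hfin.toFinset.Nonempty := by
      rw [Set.Finite.toFinset_nonempty]; exact Set.nonempty_iff_ne_empty.2 hne
    refine ⟨hfin.toFinset.max' hne', hfin.mem_toFinset.1 (Finset.max'_mem _ _), ?_⟩
    intro j hj; exact Finset.le_max' _ _ (hfin.mem_toFinset.2 hj)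
  have hab : a ≤ b := hamin b hbD
  have hr' : (1 : ℤ) ≤ (r : ℤ) := by exact_mod_cast hr
  -- Step 1 : x a < y a
  have hxa : x a < y a := by
    by_contra hcon; push_neg at hcon
    set D' : Set ℤ := D \ {a} with hD'
    have hcp : CrossProp x y D' := by
      refine ⟨?_, Or.inr ?_, Or.inr ?_⟩
      · have hEq : D' = D ∩ Set.Ioi a := by
          ext i
          simp only [hD', Set.mem_diff, Set.mem_singleton_iff, Set.mem_inter_iff, Set.mem_Ioi]
          constructor
          · rintro ⟨hi, hia⟩
            exact ⟨hi, lt_of_le_of_ne (hamin i hi) (Ne.symm hia)⟩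
          · rintro ⟨hi, hlt⟩; exact ⟨hi, by omega⟩
        rw [hEq]; exact hD.1.1.inter Set.ordConnected_Ioi
      · intro i hi
        by_cases hiD : i ∈ D
        · rcases eq_or_ne i a with rfl | hia
          · exact hcon
          · exact absurd (hi i ⟨hiD, hia⟩) (lt_irrefl i)
        · exact (hout i hiD).le
      · intro i hi
        by_cases hiD : i ∈ D
        · rcases eq_or_ne i a with rfl | hia
          · exact hcon
          · exact absurd (hi i ⟨hiD, hia⟩) (lt_irrefl i)
        · exact (hout i hiD).le
    exact (hD.2 D' hcp haD).2 rfl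
  have ha1 : (a - 1 : ℤ) ∉ D := fun h => by have := hamin _ h; omega
  have hya1 : y (a - 1) < x (a - 1) := hout _ ha1
  -- Step 2 : exchange argument
  set z : ℤ → ℝ := fun i => max (x i) (y i) with hzdef
  set w : ℤ → ℝ := fun i => min (x i) (y i) with hwdef
  have hvx : ∀ i, (z i - x i) ≠ 0 → i ∈ Finset.Icc a b := by
    intro i hi
    by_cases hiD : i ∈ D
    · exact Finset.mem_Icc.2 ⟨hamin i hiD, hbmax i hiD⟩
    · exact absurd (by simp [hzdef, max_eq_left (hout i hiD).le]) hi
  have hvy : ∀ i, (w i - y i) ≠ 0 → i ∈ Finset.Icc a b := by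
    intro i hi
    by_cases hiD : i ∈ D
    · exact Finset.mem_Icc.2 ⟨hamin i hiD, hbmax i hiD⟩
    · exact absurd (by simp [hwdef, min_eq_right (hout i hiD).le]) hi
  have hxz : x + (fun i => z i - x i) = z := by funext i; simp
  have hyw : y + (fun i => w i - y i) = w := by funext i; simp
  have h1 := hx a b (fun i => z i - x i) hvx
  rw [hxz] at h1
  have h2 := hy a b (fun i => w i - y i) hvy
  rw [hyw] at h2
  -- pointwise inequalities
  have hstep : ∀ i, siteE r E.f z i + siteE r E.f w i ≤ siteE r E.f x i + siteE r E.f y i := by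
    intro i
    rw [siteE, siteE, siteE, siteE, ← Finset.sum_add_distrib, ← Finset.sum_add_distrib]
    refine Finset.sum_le_sum fun j hj => ?_
    exact key_maxmin (E.smooth j) hlam (E.twist j hj) (x i) (y i) (x (i + j)) (y (i + j))
  have h1r : (1 : ℕ) ∈ Finset.Icc 1 r := Finset.mem_Icc.2 ⟨le_refl 1, hr⟩
  have hstrict : siteE r E.f z (a - 1) + siteE r E.f w (a - 1)
      < siteE r E.f x (a - 1) + siteE r E.f y (a - 1) := by
    rw [siteE, siteE, siteE, siteE, ← Finset.sum_add_distrib, ← Finset.sum_add_distrib]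
    refine Finset.sum_lt_sum (fun j hj => key_maxmin (E.smooth j) hlam (E.twist j hj)
      (x (a - 1)) (y (a - 1)) (x (a - 1 + j)) (y (a - 1 + j))) ⟨1, h1r, ?_⟩
    have hcast : (a - 1 + ((1 : ℕ) : ℤ)) = a := by simp
    rw [hcast]
    have e1 : z (a - 1) = x (a - 1) := max_eq_left hya1.le
    have e2 : z a = y a := max_eq_right hxa.le
    have e3 : w (a - 1) = y (a - 1) := min_eq_right hya1.le
    have e4 : w a = x a := min_eq_left hxa.le
    rw [e1, e2, e3, e4]
    exact key_strict (E.smooth 1) hlam (E.twist 1 h1r) hya1 hxa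
  have hlt : Wseg r E.f (a - r) b z + Wseg r E.f (a - r) b w
      < Wseg r E.f (a - r) b x + Wseg r E.f (a - r) b y := by
    rw [Wseg, Wseg, Wseg, Wseg, ← Finset.sum_add_distrib, ← Finset.sum_add_distrib]
    refine Finset.sum_lt_sum (fun i _ => hstep i) ⟨a - 1, Finset.mem_Icc.2 ⟨by omega, by omega⟩,
      hstrict⟩
  linarith
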